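/- Let A be a set, let m, k, ℓ ≥ 1 be integers, and let t_0,…,t_{k+1} : A^{m+2} → A be operations satisfying the reversed Jónsson-type condition (B^⌣). Let α, β, γ be congruences with respect to the operations t_0,…,t_{k+1}. If ℓ is odd, then α ∩ (β ∘_{mℓ+1} γ) ⊆ (α ∩ γ) ∘_{kℓ+1} (α ∩ β); if ℓ is even, then α ∩ (β ∘_{mℓ+1} γ) ⊆ (α ∩ β) ∘_{kℓ+1} (α ∩ γ). -/

import Mathlib

/-- Relational composition: `a (Comp R S) c` iff there is `b` with `a R b` and `b S c`. -/
def Comp {A : Type*} (R S : A → A → Prop) : A → A → Prop :=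
  fun a c => ∃ b, R a b ∧ S b c

/-- `AltComp R S m` is the alternating composition `R ∘ S ∘ R ∘ ⋯` with exactly `m` factors. -/
def AltComp {A : Type*} : (R S : A → A → Prop) → ℕ → A → A → Prop
  | _, _, 0 => Eq
  | R, _, 1 => R
  | R, S, (n+2) => Comp R (AltComp S R (n+1))

/-- Converse relation. -/
def Conv {A : Type*} (R : A → A → Prop) : A → A → Prop := fun a b => R b a

/-- Intersection of relations. -/
def InterRel {A : Type*} (R S : A → A → Prop) : A → A → Prop := fun a b => R a b ∧ S a b

/-- `RelPow R n` is `R ∘ R ∘ ⋯ ∘ R` with `n` factors. -/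
def RelPow {A : Type*} (R : A → A → Prop) : ℕ → A → A → Prop
  | 0 => Eq
  | 1 => R
  | n+2 => Comp R (RelPow R (n+1))

/-- Compatibility of a relation with a ternary operation. -/
def Compat3 {A : Type*} (f : A → A → A → A) (R : A → A → Prop) : Prop :=
  ∀ a a' b b' c c', R a a' → R b b' → R c c' → R (f a b c) (f a' b' c')

/-- Compatibility of a relation with an `n`-ary operation. -/
def CompatV {A : Type*} {n : ℕ} (f : (Fin n → A) → A) (R : A → A → Prop) : Prop :=
  ∀ a b : Fin n → A, (∀ i, R (a i) (b i)) → R (f a) (f b)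

/-- Composition `S 0 ∘ S 1 ∘ ⋯ ∘ S (n-1)` of a family of `n` relations. -/
def FamComp {A : Type*} : (n : ℕ) → (Fin n → A → A → Prop) → A → A → Prop
  | 0, _ => Eq
  | 1, S => S 0
  | n+2, S => Comp (S 0) (FamComp (n+1) (fun i => S i.succ))

/-- The substitution `x_0, x_0, x_2, x_2, x_4, x_4, …` (arguments identified in
consecutive pairs starting from the first two). -/
def EvenPair {A : Type*} (m : ℕ) (x : Fin (m+2) → A) : Fin (m+2) → A :=
  fun j => x ⟨2 * (j.val / 2), by have := j.isLt; omega⟩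

/-- The substitution `x_0, x_1, x_1, x_3, x_3, …` (arguments identified in
consecutive pairs starting from the second and third). -/
def OddPair {A : Type*} (m : ℕ) (x : Fin (m+2) → A) : Fin (m+2) → A :=
  fun j => x ⟨2 * ((j.val + 1) / 2) - 1, by have := j.isLt; omega⟩

-- unpack an alternating composition into a chain function
theorem st_unpack {A : Type*} : ∀ (n : ℕ) (X Y : A → A → Prop) (a c : A),
    AltComp X Y n a c → ∃ w : ℕ → A, w 0 = a ∧ w n = c ∧
      ∀ j, j < n → (if j % 2 = 0 then X else Y) (w j) (w (j+1)) := by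
  intro n
  induction n using Nat.strong_induction_on with
  | _ n ih =>
    match n with
    | 0 => intro X Y a c h; exact ⟨fun _ => a, rfl, h.symm ▸ rfl, by omega⟩
    | 1 =>
      intro X Y a c h
      refine ⟨fun u => if u = 0 then a else c, rfl, rfl, ?_⟩
      intro j hj
      have : j = 0 := by omega
      subst this
      simpa [AltComp] using h
    | (n+2) =>
      intro X Y a c h
      obtain ⟨b, hab, hrest⟩ := h
      obtain ⟨w', h0, hn, hl⟩ := ih (n+1) (by omega) Y X b c hrest
      refine ⟨fun u => if u = 0 then a else w' (u-1), rfl, by simpa using hn, ?_⟩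
      intro j hj
      match j with
      | 0 => simpa [h0] using hab
      | (j+1) =>
        have := hl j (by omega)
        simp only [Nat.add_sub_cancel, if_neg (Nat.succ_ne_zero j)]
        by_cases hp : j % 2 = 0
        · rw [if_neg (by omega)]
          simpa [hp] using this
        · rw [if_pos (by omega)]
          simpa [if_neg hp] using this

-- pack a chain function into an alternating composition
theorem st_pack {A : Type*} : ∀ (n : ℕ) (X Y : A → A → Prop) (w : ℕ → A),
    (∀ j, j < n → (if j % 2 = 0 then X else Y) (w j) (w (j+1))) →
    AltComp X Y n (w 0) (w n) := by
  intro n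
  induction n using Nat.strong_induction_on with
  | _ n ih =>
    match n with
    | 0 => intro X Y w _; rfl
    | 1 => intro X Y w h; simpa [AltComp] using h 0 (by omega)
    | (n+2) =>
      intro X Y w h
      refine ⟨w 1, by simpa using h 0 (by omega), ?_⟩
      have := ih (n+1) (by omega) Y X (fun u => w (u+1)) ?_
      · exact this
      · intro j hj
        have := h (j+1) (by omega)
        by_cases hp : j % 2 = 0
        · rw [if_pos hp]
          simpa [if_neg (show ¬ (j+1) % 2 = 0 by omega)] using this
        · rw [if_neg hp]
          simpa [if_pos (show (j+1) % 2 = 0 by omega)] using this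


theorem st_pred_mul (v L : ℕ) (hv : 1 ≤ v) : (v-1)*L + L = v*L := by
  obtain ⟨n, rfl⟩ : ∃ n, v = n+1 := ⟨v-1, by omega⟩
  simp [Nat.add_mul]

theorem st_par1 (v i L s : ℕ) (hv : 1 ≤ v) (hs : s ≤ L) (h : (v+i) % 2 = 1) :
    (v*L - s) % 2 = (L + (L*i + s)) % 2 := by
  have e1 := st_pred_mul v L hv
  have e2 := Nat.mul_mod v L 2
  have e3 := Nat.mul_mod L i 2
  have hsB : L ≤ v*L := Nat.le_mul_of_pos_left L (by omega)
  rcases Nat.mod_two_eq_zero_or_one v with hv2|hv2 <;>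
    rcases Nat.mod_two_eq_zero_or_one L with hl2|hl2 <;>
      rcases Nat.mod_two_eq_zero_or_one i with hi2|hi2 <;>
        simp [hv2, hl2, hi2] at e2 e3 <;> omega

theorem st_par2 (v i L s : ℕ) (hv : 1 ≤ v) (h : (v+i) % 2 = 0) :
    ((v-1)*L + s) % 2 = (L + (L*i + s)) % 2 := by
  have e1 := st_pred_mul v L hv
  have e2 := Nat.mul_mod v L 2
  have e3 := Nat.mul_mod L i 2
  rcases Nat.mod_two_eq_zero_or_one v with hv2|hv2 <;>
    rcases Nat.mod_two_eq_zero_or_one L with hl2|hl2 <;>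
      rcases Nat.mod_two_eq_zero_or_one i with hi2|hi2 <;>
        simp [hv2, hl2, hi2] at e2 e3 <;> omega

def stJ (L r u : ℕ) : ℕ :=
  if (r + (u-1)/L) % 2 = 1 then r*L - (u-1)%L else (r-1)*L + 1 + (u-1)%L

def stXn {A : Type*} (m L : ℕ) (a c : A) (z : ℕ → A) (u v : ℕ) : A :=
  if v = 0 then a else if v = m+1 then c else z (stJ L v u)

def stX {A : Type*} (m L : ℕ) (a c : A) (z : ℕ → A) (u : ℕ) : Fin (m+2) → A :=
  fun q => stXn m L a c z u q.val

def stP {A : Type*} (m k L : ℕ) (a c : A) (z : ℕ → A)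
    (t : Fin (k+2) → (Fin (m+2) → A) → A) (u : ℕ) : A :=
  if u = 0 then a else
    t ⟨min ((u-1)/L + 1) (k+1), Nat.lt_succ_of_le (Nat.min_le_right _ _)⟩ (stX m L a c z u)

theorem st_divmod (L i s : ℕ) (hL : 0 < L) (h : s < L) :
    (L*i + s)/L = i ∧ (L*i + s)%L = s := by
  constructor
  · rw [Nat.mul_add_div hL, Nat.div_eq_of_lt h]; omega
  · rw [Nat.mul_add_mod]; exact Nat.mod_eq_of_lt h

def stWn {A : Type*} (m L i : ℕ) (a c : A) (z : ℕ → A) (v : ℕ) : A :=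
  if v = 0 then a else if v = m+1 then c else
    z (if (v + i) % 2 = 1 then (if v = m then m*L+1 else v*L) else (v-1)*L)

def stW {A : Type*} (m L i : ℕ) (a c : A) (z : ℕ → A) : Fin (m+2) → A :=
  fun q => stWn m L i a c z q.val

theorem stW_odd_fix {A : Type*} (m L i : ℕ) (hm : 1 ≤ m) (a c : A) (z : ℕ → A)
    (hz0 : z 0 = a) (hzM : z (m*L+1) = c) (hi2 : i % 2 = 0) :
    OddPair m (stW m L i a c z) = stW m L i a c z := by
  funext q
  show stWn m L i a c z (2 * ((q.val + 1) / 2) - 1) = stWn m L i a c z q.val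
  rcases q with ⟨v, hv⟩
  show stWn m L i a c z (2 * ((v + 1) / 2) - 1) = stWn m L i a c z v
  by_cases h0 : v = 0
  · subst h0; rfl
  · by_cases hodd : v % 2 = 1
    · rw [show 2 * ((v + 1) / 2) - 1 = v from by omega]
    · rw [show 2 * ((v + 1) / 2) - 1 = v - 1 from by omega]
      by_cases hla : v = m+1
      · subst hla
        rw [show m+1-1 = m from by omega]
        simp only [stWn]
        rw [if_neg (show ¬ m = 0 by omega), if_neg (show ¬ m = m+1 by omega),
          if_pos (show (m + i) % 2 = 1 by omega)]
        simp [hzM]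
      · have hvm : v ≤ m := by omega
        simp only [stWn]
        rw [if_neg (show ¬ v - 1 = 0 by omega), if_neg (show ¬ v - 1 = m+1 by omega),
          if_neg h0, if_neg hla]
        congr 1
        split_ifs <;> omega

theorem stW_even_fix {A : Type*} (m L i : ℕ) (hm : 1 ≤ m) (a c : A) (z : ℕ → A)
    (hz0 : z 0 = a) (hzM : z (m*L+1) = c) (hi2 : i % 2 = 1) :
    EvenPair m (stW m L i a c z) = stW m L i a c z := by
  funext q
  show stWn m L i a c z (2 * (q.val / 2)) = stWn m L i a c z q.val
  rcases q with ⟨v, hv⟩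
  show stWn m L i a c z (2 * (v / 2)) = stWn m L i a c z v
  by_cases heven : v % 2 = 0
  · rw [show 2 * (v / 2) = v from by omega]
  · rw [show 2 * (v / 2) = v - 1 from by omega]
    by_cases h1 : v = 1
    · subst h1
      simp only [stWn]
      rw [if_neg (show ¬ (1:ℕ) = 0 by omega), if_neg (show ¬ (1:ℕ) = m+1 by omega),
        if_neg (show ¬ (1 + i) % 2 = 1 by omega)]
      simp [hz0]
    · by_cases hla : v = m+1
      · subst hla
        rw [show m+1-1 = m from by omega]
        simp only [stWn]
        rw [if_neg (show ¬ m = 0 by omega), if_neg (show ¬ m = m+1 by omega),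
          if_pos (show (m + i) % 2 = 1 by omega)]
        simp [hzM]
      · have hvm : v ≤ m := by omega
        have hv3 : 3 ≤ v := by omega
        simp only [stWn]
        rw [if_neg (show ¬ v - 1 = 0 by omega), if_neg (show ¬ v - 1 = m+1 by omega),
          if_neg (show ¬ v = 0 by omega), if_neg hla]
        congr 1
        split_ifs <;> omega

theorem stP_eq {A : Type*} (m k L : ℕ) (a c : A) (z : ℕ → A)
    (t : Fin (k+2) → (Fin (m+2) → A) → A) (u : ℕ) (hu : u ≠ 0)
    (I : Fin (k+2)) (hd : (u-1)/L + 1 = I.val) (hle : I.val ≤ k+1) :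
    stP m k L a c z t u = t I (stX m L a c z u) := by
  simp only [stP, if_neg hu]
  congr 1
  apply Fin.ext
  simp only []
  omega

theorem st_step {A : Type*} (m k ℓ : ℕ) (hm : 1 ≤ m) (hk : 1 ≤ k) (hℓ : 1 ≤ ℓ)
    (t : Fin (k+2) → (Fin (m+2) → A) → A)
    (hB1 : ∀ x : Fin (m+2) → A, t 0 x = x 0)
    (hB2 : ∀ (i : Fin (k+2)) (x : Fin (m+2) → A), x (Fin.last (m+1)) = x 0 → t i x = x 0)
    (hB3odd : ∀ (i : ℕ) (hi : i ≤ k), i % 2 = 1 →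
      ∀ x : Fin (m+2) → A, t ⟨i, Nat.lt_of_le_of_lt hi (by omega)⟩ (EvenPair m x) = t ⟨i+1, Nat.succ_lt_succ (Nat.lt_of_le_of_lt hi (by omega))⟩ (EvenPair m x))
    (hB3even : ∀ (i : ℕ) (hi : i ≤ k), i % 2 = 0 →
      ∀ x : Fin (m+2) → A, t ⟨i, Nat.lt_of_le_of_lt hi (by omega)⟩ (OddPair m x) = t ⟨i+1, Nat.succ_lt_succ (Nat.lt_of_le_of_lt hi (by omega))⟩ (OddPair m x))
    (α β γ : A → A → Prop)
    (hα : Equivalence α) (hαc : ∀ i, CompatV (t i) α)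
    (hβ : Equivalence β) (hβc : ∀ i, CompatV (t i) β)
    (hγ : Equivalence γ) (hγc : ∀ i, CompatV (t i) γ)
    (a c : A) (hac : α a c) (z : ℕ → A) (hz0 : z 0 = a) (hzM : z (m*ℓ+1) = c)
    (hlink : ∀ x, x < m*ℓ+1 → (if x % 2 = 0 then β else γ) (z x) (z (x+1)))
    (j : ℕ) (hj : j < k*ℓ+1) :
    InterRel α (if (ℓ+j) % 2 = 0 then β else γ)
      (stP m k ℓ a c z t j) (stP m k ℓ a c z t (j+1)) := by
  have hL0 : 0 < ℓ := hℓ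
  set i := j / ℓ with hi_def
  set s := j % ℓ with hs_def
  have hsl : s < ℓ := Nat.mod_lt _ hL0
  have hj' : ℓ * i + s = j := by rw [hi_def, hs_def]; exact Nat.div_add_mod j ℓ
  have hkl : k * ℓ = ℓ * k := Nat.mul_comm k ℓ
  have hik : i ≤ k := by
    by_contra hcon
    have h1 : ℓ*(k+1) ≤ ℓ*i := Nat.mul_le_mul_left ℓ (by omega)
    have h2 : ℓ*(k+1) = ℓ*k + ℓ := by ring
    omega
  have hik2 : i < k+2 := by omega
  have hik2' : i+1 < k+2 := by omega
  -- the relation of step j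
  set δ := (if (ℓ+j) % 2 = 0 then β else γ) with hδ_def
  have hδe : Equivalence δ := by rw [hδ_def]; split <;> assumption
  have hδc : ∀ q : Fin (k+2), CompatV (t q) δ := by
    intro q; rw [hδ_def]; split
    · exact hβc q
    · exact hγc q
  have hzlink : ∀ x, x < m*ℓ+1 → x % 2 = (ℓ+j) % 2 → δ (z x) (z (x+1)) := by
    intro x hx hpar
    have h := hlink x hx
    rw [hδ_def]
    by_cases h0 : (ℓ+j) % 2 = 0
    · rw [if_pos h0]; rw [if_pos (by omega)] at h; exact h
    · rw [if_neg h0]; rw [if_neg (by omega)] at h; exact h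
  -- protection
  have hne0last : (0 : Fin (m+2)) ≠ Fin.last (m+1) := by
    simp only [ne_eq, Fin.ext_iff, Fin.val_last, Fin.val_zero]; omega
  have hprot : ∀ (q : Fin (k+2)) (w : Fin (m+2) → A),
      w 0 = a → w (Fin.last (m+1)) = c → α (t q w) a := by
    intro q w h0 hl
    have h1 : α (t q w) (t q (Function.update w (Fin.last (m+1)) a)) := by
      apply hαc q
      intro r
      by_cases hr : r = Fin.last (m+1)
      · subst hr; rw [hl, Function.update_self]; exact hα.symm hac
      · rw [Function.update_of_ne hr]; exact hα.refl _
    have h2 : t q (Function.update w (Fin.last (m+1)) a) = a := by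
      rw [hB2 q _ (by rw [Function.update_self, Function.update_of_ne hne0last]; exact h0.symm)]
      rw [Function.update_of_ne hne0last]; exact h0
    rw [h2] at h1; exact h1
  have hX0 : ∀ u, stX m ℓ a c z u 0 = a := by
    intro u; simp [stX, stXn]
  have hXlast : ∀ u, stX m ℓ a c z u (Fin.last (m+1)) = c := by
    intro u
    simp only [stX, stXn, Fin.val_last]
    rw [if_neg (show ¬ m+1 = 0 by omega)]
    simp
  have hprotP : ∀ u, α (stP m k ℓ a c z t u) a := by
    intro u
    by_cases hu : u = 0
    · subst hu; simp only [stP, if_pos rfl]; exact hα.refl a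
    · simp only [stP, if_neg hu]; exact hprot _ _ (hX0 u) (hXlast u)
  have hαpart : α (stP m k ℓ a c z t j) (stP m k ℓ a c z t (j+1)) :=
    hα.trans (hprotP j) (hα.symm (hprotP (j+1)))
  show α _ _ ∧ δ _ _
  refine ⟨hαpart, ?_⟩
  -- characterizations at u = j+1
  have hdm1 := st_divmod ℓ i s hL0 hsl
  have hu1 : (j+1) - 1 = ℓ*i + s := by omega
  have hdiv1 : ((j+1)-1)/ℓ = i := by rw [hu1]; exact hdm1.1
  have hmod1 : ((j+1)-1)%ℓ = s := by rw [hu1]; exact hdm1.2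
  have hJ1 : ∀ v, stJ ℓ v (j+1) = if (v + i) % 2 = 1 then v*ℓ - s else (v-1)*ℓ + 1 + s := by
    intro v; simp only [stJ, hdiv1, hmod1]
  have hp1 : stP m k ℓ a c z t (j+1) = t ⟨i+1, hik2'⟩ (stX m ℓ a c z (j+1)) :=
    stP_eq m k ℓ a c z t (j+1) (Nat.succ_ne_zero j) ⟨i+1, hik2'⟩
      (by rw [hdiv1]) (by simp; omega)
  by_cases hs0 : s = 0
  · -- transition step
    have hJ1' : ∀ v, stJ ℓ v (j+1) = if (v + i) % 2 = 1 then v*ℓ else (v-1)*ℓ + 1 := by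
      intro v; rw [hJ1 v, hs0]; simp
    have hj0 : ℓ * i + 0 = j := by omega
    -- dip pointwise
    have hpw : ∀ q : Fin (m+2), δ (stX m ℓ a c z (j+1) q) (stW m ℓ i a c z q) := by
      intro q
      rcases q with ⟨v, hv⟩
      show δ (stXn m ℓ a c z (j+1) v) (stWn m ℓ i a c z v)
      simp only [stXn, stWn]
      by_cases h0 : v = 0
      · rw [if_pos h0, if_pos h0]; exact hδe.refl a
      · rw [if_neg h0, if_neg h0]
        by_cases hla : v = m+1
        · rw [if_pos hla, if_pos hla]; exact hδe.refl c
        · rw [if_neg hla, if_neg hla]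
          have hv1 : 1 ≤ v := by omega
          have hvm : v ≤ m := by omega
          have hbm : v*ℓ ≤ m*ℓ := Nat.mul_le_mul_right ℓ hvm
          have hbl : ℓ ≤ v*ℓ := Nat.le_mul_of_pos_left ℓ (by omega)
          have e1 := st_pred_mul v ℓ hv1
          rw [hJ1' v]
          by_cases hpar : (v+i) % 2 = 1
          · rw [if_pos hpar, if_pos hpar]
            by_cases hvm' : v = m
            · rw [if_pos hvm']
              subst hvm'
              have hpx : (v*ℓ) % 2 = (ℓ+j) % 2 := by
                conv_rhs => rw [← hj0]
                have h := st_par1 v i ℓ 0 hv1 (by omega) hpar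
                simpa using h
              exact hzlink (v*ℓ) (by omega) hpx
            · rw [if_neg hvm']; exact hδe.refl _
          · rw [if_neg hpar, if_neg hpar]
            have hpar0 : (v+i) % 2 = 0 := by omega
            have hpx : ((v-1)*ℓ) % 2 = (ℓ+j) % 2 := by
              conv_rhs => rw [← hj0]
              have h := st_par2 v i ℓ 0 hv1 hpar0
              simpa using h
            exact hδe.symm (hzlink ((v-1)*ℓ) (by omega) hpx)
    -- B3 transition
    have hB3 : t ⟨i, hik2⟩ (stW m ℓ i a c z) = t ⟨i+1, hik2'⟩ (stW m ℓ i a c z) := by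
      rcases Nat.mod_two_eq_zero_or_one i with hi2|hi2
      · have h := hB3even i hik hi2 (stW m ℓ i a c z)
        rw [stW_odd_fix m ℓ i hm a c z hz0 hzM hi2] at h
        exact h
      · have h := hB3odd i hik hi2 (stW m ℓ i a c z)
        rw [stW_even_fix m ℓ i hm a c z hz0 hzM hi2] at h
        exact h
    have d1 : δ (t ⟨i, hik2⟩ (stX m ℓ a c z (j+1))) (t ⟨i, hik2⟩ (stW m ℓ i a c z)) :=
      hδc _ _ _ hpw
    have d3 : δ (t ⟨i+1, hik2'⟩ (stW m ℓ i a c z)) (t ⟨i+1, hik2'⟩ (stX m ℓ a c z (j+1))) :=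
      hδe.symm (hδc _ _ _ hpw)
    rw [hB3] at d1
    have dmain : δ (t ⟨i, hik2⟩ (stX m ℓ a c z (j+1))) (t ⟨i+1, hik2'⟩ (stX m ℓ a c z (j+1))) :=
      hδe.trans d1 d3
    rcases Nat.eq_zero_or_pos i with hi0|hi1
    · -- entry: j = 0, p j = a
      have hmul0 : ℓ * i = 0 := by rw [hi0]; ring
      have hj0' : j = 0 := by omega
      have hpa : stP m k ℓ a c z t j = a := by rw [hj0']; simp [stP]
      have hia : t (⟨i, hik2⟩ : Fin (k+2)) (stX m ℓ a c z (j+1)) = a := by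
        have h0' : (⟨i, hik2⟩ : Fin (k+2)) = 0 := Fin.ext (by simp [hi0])
        rw [h0', hB1]; exact hX0 (j+1)
      have hfin := dmain
      rw [hia] at hfin
      rw [hp1, hpa]
      exact hfin
    · -- interior transition: X j = X (j+1)
      have e0 : ℓ*(i-1) + ℓ = ℓ*i := by
        rw [Nat.mul_comm ℓ (i-1), Nat.mul_comm ℓ i]; exact st_pred_mul i ℓ hi1
      have hu0 : j - 1 = ℓ*(i-1) + (ℓ-1) := by omega
      have hdm0 := st_divmod ℓ (i-1) (ℓ-1) hL0 (by omega)
      have hdiv0 : (j-1)/ℓ = i-1 := by rw [hu0]; exact hdm0.1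
      have hmod0 : (j-1)%ℓ = ℓ-1 := by rw [hu0]; exact hdm0.2
      have hp0 : stP m k ℓ a c z t j = t ⟨i, hik2⟩ (stX m ℓ a c z j) :=
        stP_eq m k ℓ a c z t j (by omega) ⟨i, hik2⟩
          (by rw [hdiv0]; simp; omega) (by simp; omega)
      have hXX : stX m ℓ a c z j = stX m ℓ a c z (j+1) := by
        funext q
        rcases q with ⟨v, hv⟩
        show stXn m ℓ a c z j v = stXn m ℓ a c z (j+1) v
        simp only [stXn]
        by_cases h0 : v = 0
        · rw [if_pos h0, if_pos h0]
        · rw [if_neg h0, if_neg h0]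
          by_cases hla : v = m+1
          · rw [if_pos hla, if_pos hla]
          · rw [if_neg hla, if_neg hla]
            congr 1
            rw [hJ1' v]
            simp only [stJ, hdiv0, hmod0]
            have hv1 : 1 ≤ v := by omega
            have e1 := st_pred_mul v ℓ hv1
            by_cases hpar : (v + i) % 2 = 1
            · rw [if_neg (show ¬ (v + (i-1)) % 2 = 1 by omega), if_pos hpar]
              omega
            · rw [if_pos (show (v + (i-1)) % 2 = 1 by omega), if_neg hpar]
              omega
      rw [hp0, hp1, hXX]
      exact dmain
  · -- moving step
    have hj1 : 1 ≤ j := by omega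
    have hdm0 := st_divmod ℓ i (s-1) hL0 (by omega)
    have hu0 : j - 1 = ℓ*i + (s-1) := by omega
    have hdiv0 : (j-1)/ℓ = i := by rw [hu0]; exact hdm0.1
    have hmod0 : (j-1)%ℓ = s-1 := by rw [hu0]; exact hdm0.2
    have hJ0 : ∀ v, stJ ℓ v j = if (v + i) % 2 = 1 then v*ℓ - (s-1) else (v-1)*ℓ + 1 + (s-1) := by
      intro v; simp only [stJ, hdiv0, hmod0]
    have hp0 : stP m k ℓ a c z t j = t ⟨i+1, hik2'⟩ (stX m ℓ a c z j) :=
      stP_eq m k ℓ a c z t j (by omega) ⟨i+1, hik2'⟩ (by rw [hdiv0]) (by simp; omega)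
    have hpw : ∀ q : Fin (m+2), δ (stX m ℓ a c z j q) (stX m ℓ a c z (j+1) q) := by
      intro q
      rcases q with ⟨v, hv⟩
      show δ (stXn m ℓ a c z j v) (stXn m ℓ a c z (j+1) v)
      simp only [stXn]
      by_cases h0 : v = 0
      · rw [if_pos h0, if_pos h0]; exact hδe.refl a
      · rw [if_neg h0, if_neg h0]
        by_cases hla : v = m+1
        · rw [if_pos hla, if_pos hla]; exact hδe.refl c
        · rw [if_neg hla, if_neg hla]
          have hv1 : 1 ≤ v := by omega
          have hvm : v ≤ m := by omega
          have hbm : v*ℓ ≤ m*ℓ := Nat.mul_le_mul_right ℓ hvm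
          have hbl : ℓ ≤ v*ℓ := Nat.le_mul_of_pos_left ℓ (by omega)
          have e1 := st_pred_mul v ℓ hv1
          rw [hJ0 v, hJ1 v]
          by_cases hpar : (v+i) % 2 = 1
          · rw [if_pos hpar, if_pos hpar]
            have hx : (v*ℓ - s) + 1 = v*ℓ - (s-1) := by omega
            have hpx : (v*ℓ - s) % 2 = (ℓ+j) % 2 := by
              conv_rhs => rw [← hj']
              exact st_par1 v i ℓ s hv1 (by omega) hpar
            have hh := hzlink (v*ℓ - s) (by omega) hpx
            rw [hx] at hh
            exact hδe.symm hh
          · rw [if_neg hpar, if_neg hpar]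
            have hpar0 : (v+i) % 2 = 0 := by omega
            have hx1 : (v-1)*ℓ + 1 + (s-1) = (v-1)*ℓ + s := by omega
            have hx2 : (v-1)*ℓ + 1 + s = ((v-1)*ℓ + s) + 1 := by omega
            have hpx : ((v-1)*ℓ + s) % 2 = (ℓ+j) % 2 := by
              conv_rhs => rw [← hj']
              exact st_par2 v i ℓ s hv1 hpar0
            rw [hx1, hx2]
            exact hzlink _ (by omega) hpx
    rw [hp0, hp1]
    exact hδc _ _ _ hpw

theorem stmt17 {A : Type*} (m k ℓ : ℕ) (hm : 1 ≤ m) (hk : 1 ≤ k) (hℓ : 1 ≤ ℓ)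
    (t : Fin (k+2) → (Fin (m+2) → A) → A)
    (hB1 : ∀ x : Fin (m+2) → A, t 0 x = x 0)
    (hB2 : ∀ (i : Fin (k+2)) (x : Fin (m+2) → A), x (Fin.last (m+1)) = x 0 → t i x = x 0)
    (hB3odd : ∀ (i : ℕ) (hi : i ≤ k), i % 2 = 1 →
      ∀ x : Fin (m+2) → A, t ⟨i, by omega⟩ (EvenPair m x) = t ⟨i+1, by omega⟩ (EvenPair m x))
    (hB3even : ∀ (i : ℕ) (hi : i ≤ k), i % 2 = 0 →
      ∀ x : Fin (m+2) → A, t ⟨i, by omega⟩ (OddPair m x) = t ⟨i+1, by omega⟩ (OddPair m x))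
    (hB4 : ∀ x : Fin (m+2) → A, t (Fin.last (k+1)) x = x (Fin.last (m+1)))
    (α β γ : A → A → Prop)
    (hα : Equivalence α) (hαcompat : ∀ i, CompatV (t i) α)
    (hβ : Equivalence β) (hβcompat : ∀ i, CompatV (t i) β)
    (hγ : Equivalence γ) (hγcompat : ∀ i, CompatV (t i) γ) :
    (Odd ℓ → ∀ a c, InterRel α (AltComp β γ (m * ℓ + 1)) a c →
      AltComp (InterRel α γ) (InterRel α β) (k * ℓ + 1) a c) ∧
    (Even ℓ → ∀ a c, InterRel α (AltComp β γ (m * ℓ + 1)) a c →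
      AltComp (InterRel α β) (InterRel α γ) (k * ℓ + 1) a c) := by
  have hkl : k * ℓ = ℓ * k := Nat.mul_comm k ℓ
  have hdN : ((k*ℓ+1)-1)/ℓ = k := by
    have h := (st_divmod ℓ k 0 (by omega) (by omega)).1
    have h2 : (k*ℓ+1)-1 = ℓ*k + 0 := by omega
    rw [h2]; exact h
  constructor
  · intro hodd a c hin
    obtain ⟨hac, hch⟩ := hin
    obtain ⟨z, hz0, hzM, hlink⟩ := st_unpack (m*ℓ+1) β γ a c hch
    have hl2 : ℓ % 2 = 1 := Nat.odd_iff.mp hodd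
    have hw0 : stP m k ℓ a c z t 0 = a := by simp [stP]
    have hwN : stP m k ℓ a c z t (k*ℓ+1) = c := by
      rw [stP_eq m k ℓ a c z t (k*ℓ+1) (by omega) (Fin.last (k+1))
        (by rw [hdN, Fin.val_last]) (by rw [Fin.val_last])]
      rw [hB4]
      simp only [stX, stXn, Fin.val_last]
      rw [if_neg (show ¬ m+1 = 0 by omega)]; simp
    have hlinks : ∀ j, j < k*ℓ+1 → (if j % 2 = 0 then InterRel α γ else InterRel α β)
        (stP m k ℓ a c z t j) (stP m k ℓ a c z t (j+1)) := by
      intro j hj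
      have h := st_step m k ℓ hm hk hℓ t hB1 hB2 hB3odd hB3even α β γ hα hαcompat hβ
        hβcompat hγ hγcompat a c hac z hz0 hzM hlink j hj
      by_cases hp : j % 2 = 0
      · rw [if_pos hp]
        rw [if_neg (show ¬ (ℓ+j) % 2 = 0 by omega)] at h
        exact h
      · rw [if_neg hp]
        rw [if_pos (show (ℓ+j) % 2 = 0 by omega)] at h
        exact h
    have hmain := st_pack (k*ℓ+1) (InterRel α γ) (InterRel α β) (stP m k ℓ a c z t) hlinks
    rw [hw0, hwN] at hmain
    exact hmain
  · intro heven a c hin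
    obtain ⟨hac, hch⟩ := hin
    obtain ⟨z, hz0, hzM, hlink⟩ := st_unpack (m*ℓ+1) β γ a c hch
    have hl2 : ℓ % 2 = 0 := Nat.even_iff.mp heven
    have hw0 : stP m k ℓ a c z t 0 = a := by simp [stP]
    have hwN : stP m k ℓ a c z t (k*ℓ+1) = c := by
      rw [stP_eq m k ℓ a c z t (k*ℓ+1) (by omega) (Fin.last (k+1))
        (by rw [hdN, Fin.val_last]) (by rw [Fin.val_last])]
      rw [hB4]
      simp only [stX, stXn, Fin.val_last]
      rw [if_neg (show ¬ m+1 = 0 by omega)]; simp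
    have hlinks : ∀ j, j < k*ℓ+1 → (if j % 2 = 0 then InterRel α β else InterRel α γ)
        (stP m k ℓ a c z t j) (stP m k ℓ a c z t (j+1)) := by
      intro j hj
      have h := st_step m k ℓ hm hk hℓ t hB1 hB2 hB3odd hB3even α β γ hα hαcompat hβ
        hβcompat hγ hγcompat a c hac z hz0 hzM hlink j hj
      by_cases hp : j % 2 = 0
      · rw [if_pos hp]
        rw [if_pos (show (ℓ+j) % 2 = 0 by omega)] at h
        exact h
      · rw [if_neg hp]
        rw [if_neg (show ¬ (ℓ+j) % 2 = 0 by omega)] at h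
        exact h
    have hmain := st_pack (k*ℓ+1) (InterRel α β) (InterRel α γ) (stP m k ℓ a c z t) hlinks
    rw [hw0, hwN] at hmain
    exact hmain
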